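/- arXiv:2605.18634 — 4 statements merged into one kernel-verified Lean document; each statement's English description precedes it below -/
import Mathlib

section
/- The graph 2K₂, consisting of four vertices and two disjoint edges, has harmonious chromatic number 3, while vc(2K₂) = 2, Δ(2K₂) = 1, and 2K₂ is 1-degenerate; in particular h(2K₂) > vc(2K₂) + Δ(2K₂)(Δ(2K₂)−1). -/
def IsHarmonious {V : Type*} {α : Type*} (G : SimpleGraph V) (c : V → α) : Prop :=
  (∀ ⦃u v : V⦄, G.Adj u v → c u ≠ c v) ∧
  ∀ ⦃u v x y : V⦄, G.Adj u v → G.Adj x y →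
    s(c u, c v) = s(c x, c y) → s(u, v) = s(x, y)

noncomputable def hchrom {V : Type*} [Fintype V] (G : SimpleGraph V) : ℕ :=
  sInf {k | ∃ c : V → Fin k, IsHarmonious G c}

noncomputable def vcNum {V : Type*} [Fintype V] (G : SimpleGraph V) : ℕ :=
  sInf {n | ∃ S : Finset V, S.card = n ∧ ∀ ⦃u v : V⦄, G.Adj u v → u ∈ S ∨ v ∈ S}

def Degenerate {V : Type*} (d : ℕ) (G : SimpleGraph V) [DecidableRel G.Adj] : Prop :=
  ∀ S : Finset V, S.Nonempty → ∃ v ∈ S, (S.filter (fun u => G.Adj v u)).card ≤ d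

/-- The graph `2K₂`: four vertices and two disjoint edges. -/
def twoK2 : SimpleGraph (Fin 4) :=
  SimpleGraph.fromRel (fun a b => (a = 0 ∧ b = 1) ∨ (a = 2 ∧ b = 3))

instance : DecidableRel twoK2.Adj := fun a b => by
  unfold twoK2 SimpleGraph.fromRel
  exact inferInstanceAs (Decidable (_ ∧ _))

lemma h3mem : ∃ c : Fin 4 → Fin 3, IsHarmonious twoK2 c := by
  refine ⟨![0, 1, 0, 2], ?_⟩
  constructor <;> decide

lemma hlb : ∀ k ∈ {k | ∃ c : Fin 4 → Fin k, IsHarmonious twoK2 c}, 3 ≤ k := by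
  intro k hk
  by_contra h
  push_neg at h
  simp only [Set.mem_setOf_eq, IsHarmonious] at hk
  interval_cases k <;> revert hk <;> decide

lemma hchrom_eq : hchrom twoK2 = 3 := by
  refine le_antisymm (Nat.sInf_le h3mem) (le_csInf ⟨3, h3mem⟩ hlb)

lemma vc2mem : ∃ S : Finset (Fin 4), S.card = 2 ∧ ∀ ⦃u v : Fin 4⦄, twoK2.Adj u v → u ∈ S ∨ v ∈ S := by
  exact ⟨{0, 2}, by decide, by decide⟩

lemma vcNum_eq : vcNum twoK2 = 2 := by
  refine le_antisymm (Nat.sInf_le vc2mem) (le_csInf ⟨2, vc2mem⟩ ?_)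
  intro n hn
  by_contra h
  push_neg at h
  interval_cases n <;> revert hn <;> decide

theorem stmt5 :
    hchrom twoK2 = 3 ∧ vcNum twoK2 = 2 ∧ twoK2.maxDegree = 1 ∧
      Degenerate 1 twoK2 ∧
      vcNum twoK2 + twoK2.maxDegree * (twoK2.maxDegree - 1) < hchrom twoK2 := by
  have hmax : twoK2.maxDegree = 1 := by decide
  refine ⟨hchrom_eq, vcNum_eq, hmax, by unfold Degenerate; decide, ?_⟩
  rw [hchrom_eq, vcNum_eq, hmax]; norm_num
end

section
/- Let G be a graph and u, v ∈ V(G) with dist_G(u,v) ≥ 3, and let H = G ∘ uv be obtained from G by identifying u and v (replacing them by a new vertex adjacent to all neighbors of u or v). Then h(G) ≤ h(H). -/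
def DistAtLeastThree {V : Type*} (G : SimpleGraph V) (u v : V) : Prop :=
  u ≠ v ∧ ¬ G.Adj u v ∧ ∀ w : V, ¬ (G.Adj u w ∧ G.Adj w v)

/-- The graph `G ∘ uv` obtained by identifying `v` with `u`: vertex `v` is
removed and `u` becomes adjacent to all former neighbors of `v`. -/
def identify {V : Type*} (G : SimpleGraph V) (u v : V) :
    SimpleGraph {x : V // x ≠ v} where
  Adj a b := a ≠ b ∧
    (G.Adj a.1 b.1 ∨ (a.1 = u ∧ G.Adj v b.1) ∨ (b.1 = u ∧ G.Adj a.1 v))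
  symm := by
    constructor
    rintro a b ⟨hab, h | ⟨h1, h2⟩ | ⟨h1, h2⟩⟩
    · exact ⟨hab.symm, Or.inl h.symm⟩
    · exact ⟨hab.symm, Or.inr (Or.inr ⟨h1, h2.symm⟩)⟩
    · exact ⟨hab.symm, Or.inr (Or.inl ⟨h1, h2.symm⟩)⟩
  loopless := ⟨fun a h => h.1 rfl⟩

theorem stmt8 {V : Type*} [Fintype V] [DecidableEq V] (G : SimpleGraph V)
    (u v : V) (huv : DistAtLeastThree G u v) :
    hchrom G ≤ hchrom (identify G u v) := by

  obtain ⟨hne, hnadj, hmid⟩ := huv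
  have hH : ∃ c : {x : V // x ≠ v} → Fin (Fintype.card {x : V // x ≠ v}),
      IsHarmonious (identify G u v) c := by
    refine ⟨Fintype.equivFin _, ?_, ?_⟩
    · intro a b hab hc
      exact hab.1 ((Fintype.equivFin _).injective hc)
    · intro a b x y _ _ h
      rw [Sym2.eq_iff] at h ⊢
      rcases h with ⟨h1, h2⟩ | ⟨h1, h2⟩
      · exact Or.inl ⟨(Fintype.equivFin _).injective h1, (Fintype.equivFin _).injective h2⟩
      · exact Or.inr ⟨(Fintype.equivFin _).injective h1, (Fintype.equivFin _).injective h2⟩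
  have hmem : hchrom (identify G u v) ∈
      {k | ∃ c : {x : V // x ≠ v} → Fin k, IsHarmonious (identify G u v) c} :=
    Nat.sInf_mem ⟨_, hH⟩
  obtain ⟨c, hcprop, hcharm⟩ := hmem
  set φ : V → {x : V // x ≠ v} := fun x => if h : x = v then ⟨u, hne⟩ else ⟨x, h⟩ with hφ
  have hφv : φ v = ⟨u, hne⟩ := by simp [hφ]
  have hφn : ∀ (x : V) (hx : x ≠ v), φ x = ⟨x, hx⟩ := by intro x hx; simp [hφ, hx]
  have hφeq : ∀ a x : V, φ a = φ x → a = x ∨ (a = v ∧ x = u) ∨ (a = u ∧ x = v) := by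
    intro a x h
    by_cases ha : a = v <;> by_cases hx : x = v
    · exact Or.inl (ha.trans hx.symm)
    · rw [ha, hφv, hφn x hx] at h
      exact Or.inr (Or.inl ⟨ha, (congrArg Subtype.val h).symm⟩)
    · rw [hx, hφv, hφn a ha] at h
      exact Or.inr (Or.inr ⟨congrArg Subtype.val h, hx⟩)
    · rw [hφn a ha, hφn x hx] at h
      exact Or.inl (congrArg Subtype.val h)
  have hφadj : ∀ {a b : V}, G.Adj a b → (identify G u v).Adj (φ a) (φ b) := by
    intro a b hab
    by_cases ha : a = v
    · have hb : b ≠ v := fun hb => hab.ne (ha.trans hb.symm)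
      have hvb : G.Adj v b := ha ▸ hab
      rw [ha, hφv, hφn b hb]
      refine ⟨?_, Or.inr (Or.inl ⟨rfl, hvb⟩)⟩
      intro h
      have hub : u = b := congrArg Subtype.val h
      exact hnadj (hub ▸ hvb.symm)
    · by_cases hb : b = v
      · have hav : G.Adj a v := hb ▸ hab
        rw [hb, hφv, hφn a ha]
        refine ⟨?_, Or.inr (Or.inr ⟨rfl, hav⟩)⟩
        intro h
        have hau : a = u := congrArg Subtype.val h
        exact hnadj (hau ▸ hav)
      · rw [hφn a ha, hφn b hb]
        exact ⟨fun h => hab.ne (congrArg Subtype.val h), Or.inl hab⟩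
  have key : ∀ {a b x y : V}, G.Adj a b → G.Adj x y → φ a = φ x → φ b = φ y →
      a = x ∧ b = y := by
    intro a b x y hab hxy h1 h2
    rcases hφeq a x h1 with hax | ⟨ha, hx⟩ | ⟨ha, hx⟩ <;>
      rcases hφeq b y h2 with hby | ⟨hb, hy⟩ | ⟨hb, hy⟩ <;>
      subst_vars
    · exact ⟨rfl, rfl⟩
    · exact absurd ⟨hxy.symm, hab⟩ (hmid _)
    · exact absurd ⟨hab.symm, hxy⟩ (hmid _)
    · exact absurd ⟨hxy, hab.symm⟩ (hmid _)
    · exact absurd hab (G.loopless.irrefl _)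
    · exact absurd hab.symm hnadj
    · exact absurd ⟨hab, hxy.symm⟩ (hmid _)
    · exact absurd hab hnadj
    · exact absurd hab (G.loopless.irrefl _)
  unfold hchrom
  apply Nat.sInf_le
  refine ⟨fun x => c (φ x), ?_, ?_⟩
  · intro a b hab
    exact hcprop (hφadj hab)
  · intro a b x y hab hxy h
    have := hcharm (hφadj hab) (hφadj hxy) h
    rw [Sym2.eq_iff] at this ⊢
    rcases this with ⟨h1, h2⟩ | ⟨h1, h2⟩
    · exact Or.inl (key hab hxy h1 h2)
    · obtain ⟨e1, e2⟩ := key hab hxy.symm h1 h2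
      exact Or.inr ⟨e1, e2⟩
end

section
/- Let G be a graph with diameter at least 3. Then there exist vertices u, v with dist_G(u,v) ≥ 3 such that the graph H = G ∘ uv obtained by identifying u and v satisfies h(H) = h(G). -/
lemma key {V : Type*} [DecidableEq V] {G : SimpleGraph V} {u v : V}
    (hd : DistAtLeastThree G u v) {a b x y : V}
    (hab : G.Adj a b) (hxy : G.Adj x y)
    (h : s((if a = v then u else a), (if b = v then u else b)) =
         s((if x = v then u else x), (if y = v then u else y))) :
    s(a, b) = s(x, y) := by
  obtain ⟨hne, hnadj, hcom⟩ := hd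
  by_cases ha : a = v
  · have hb : b ≠ v := fun hb => hab.ne (ha.trans hb.symm)
    rw [ha] at hab
    simp only [if_pos ha, if_neg hb] at h
    by_cases hx : x = v
    · have hy : y ≠ v := fun hy => hxy.ne (hx.trans hy.symm)
      rw [hx] at hxy
      simp only [if_pos hx, if_neg hy] at h
      rcases Sym2.eq_iff.mp h with ⟨-, rfl⟩ | ⟨rfl, rfl⟩
      · rw [ha, hx]
      · exact absurd hxy.symm hnadj
    · by_cases hy : y = v
      · have hx' : x ≠ v := fun hx' => hxy.ne (hx'.trans hy.symm)
        rw [hy] at hxy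
        simp only [if_pos hy, if_neg hx'] at h
        rcases Sym2.eq_iff.mp h with ⟨rfl, rfl⟩ | ⟨-, rfl⟩
        · exact absurd hxy hnadj
        · rw [ha, hy, Sym2.eq_swap]
      · simp only [if_neg hx, if_neg hy] at h
        rcases Sym2.eq_iff.mp h with ⟨rfl, rfl⟩ | ⟨rfl, rfl⟩
        · exact absurd ⟨hxy, hab.symm⟩ (hcom b)
        · exact absurd ⟨hxy.symm, hab.symm⟩ (hcom b)
  · by_cases hb : b = v
    · rw [hb] at hab
      simp only [if_pos hb, if_neg ha] at h
      by_cases hx : x = v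
      · have hy : y ≠ v := fun hy => hxy.ne (hx.trans hy.symm)
        rw [hx] at hxy
        simp only [if_pos hx, if_neg hy] at h
        rcases Sym2.eq_iff.mp h with ⟨rfl, rfl⟩ | ⟨rfl, -⟩
        · exact absurd hxy.symm hnadj
        · rw [hb, hx, Sym2.eq_swap]
      · by_cases hy : y = v
        · have hx' : x ≠ v := fun hx' => hxy.ne (hx'.trans hy.symm)
          rw [hy] at hxy
          simp only [if_pos hy, if_neg hx'] at h
          rcases Sym2.eq_iff.mp h with ⟨rfl, -⟩ | ⟨rfl, rfl⟩
          · rw [hb, hy]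
          · exact absurd hxy hnadj
        · simp only [if_neg hx, if_neg hy] at h
          rcases Sym2.eq_iff.mp h with ⟨rfl, rfl⟩ | ⟨rfl, rfl⟩
          · exact absurd ⟨hxy.symm, hab⟩ (hcom a)
          · exact absurd ⟨hxy, hab⟩ (hcom a)
    · simp only [if_neg ha, if_neg hb] at h
      by_cases hx : x = v
      · have hy : y ≠ v := fun hy => hxy.ne (hx.trans hy.symm)
        rw [hx] at hxy
        simp only [if_pos hx, if_neg hy] at h
        rcases Sym2.eq_iff.mp h with ⟨rfl, rfl⟩ | ⟨rfl, rfl⟩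
        · exact absurd ⟨hab, hxy.symm⟩ (hcom b)
        · exact absurd ⟨hab.symm, hxy.symm⟩ (hcom a)
      · by_cases hy : y = v
        · have hx' : x ≠ v := fun hx' => hxy.ne (hx'.trans hy.symm)
          rw [hy] at hxy
          simp only [if_pos hy, if_neg hx'] at h
          rcases Sym2.eq_iff.mp h with ⟨rfl, rfl⟩ | ⟨rfl, rfl⟩
          · exact absurd ⟨hab.symm, hxy⟩ (hcom a)
          · exact absurd ⟨hab, hxy⟩ (hcom b)
        · simpa only [if_neg hx, if_neg hy] using h

lemma inj_harm {V α : Type*} {G : SimpleGraph V} {c : V → α} (hc : Function.Injective c) :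
    IsHarmonious G c := by
  refine ⟨fun u v h hcv => h.ne (hc hcv), fun u v x y _ _ h => ?_⟩
  exact Sym2.map.injective hc (by simpa only [Sym2.map_pair_eq] using h)

lemma hset_ne {V : Type*} [Fintype V] (G : SimpleGraph V) :
    {k | ∃ c : V → Fin k, IsHarmonious G c}.Nonempty :=
  ⟨Fintype.card V, Fintype.equivFin V, inj_harm (Fintype.equivFin V).injective⟩

lemma dist_of_eq {V α : Type*} {G : SimpleGraph V} {c : V → α} (hc : IsHarmonious G c)
    {u v : V} (hne : u ≠ v) (he : c u = c v) : DistAtLeastThree G u v := by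
  refine ⟨hne, fun h => hc.1 h he, fun w hw => ?_⟩
  have h2 : s(c u, c w) = s(c v, c w) := by rw [he]
  rcases Sym2.eq_iff.mp (hc.2 hw.1 hw.2.symm h2) with ⟨h3, -⟩ | ⟨h3, h4⟩
  · exact hne h3
  · exact hne (h3.trans h4)

lemma down {V : Type*} [Fintype V] [DecidableEq V] {G : SimpleGraph V} {u v : V}
    (hd : DistAtLeastThree G u v) {k : ℕ} {c : V → Fin k}
    (hc : IsHarmonious G c) (huv : c u = c v) :
    hchrom (identify G u v) ≤ k := by
  apply Nat.sInf_le
  have lift : ∀ {a b : {x : V // x ≠ v}}, (identify G u v).Adj a b →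
      ∃ a' b' : V, G.Adj a' b' ∧ a.1 = (if a' = v then u else a') ∧
        b.1 = (if b' = v then u else b') ∧ c a' = c a.1 ∧ c b' = c b.1 := by
    rintro a b ⟨hne, hadj | ⟨h1, h2⟩ | ⟨h1, h2⟩⟩
    · exact ⟨a.1, b.1, hadj, (if_neg a.2).symm, (if_neg b.2).symm, rfl, rfl⟩
    · exact ⟨v, b.1, h2, by rw [if_pos rfl, h1], (if_neg b.2).symm,
        by rw [← huv, h1], rfl⟩
    · exact ⟨a.1, v, h2, (if_neg a.2).symm, by rw [if_pos rfl, h1],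
        rfl, by rw [← huv, h1]⟩
  refine ⟨fun a => c a.1, ?_, ?_⟩
  · rintro a b ⟨hne, hadj | ⟨h1, h2⟩ | ⟨h1, h2⟩⟩
    · exact hc.1 hadj
    · show c a.1 ≠ c b.1
      rw [h1, huv]; exact hc.1 h2
    · show c a.1 ≠ c b.1
      rw [h1, huv]; exact hc.1 h2
  · intro a b x y hab hxy h
    obtain ⟨a', b', hab', ha1, hb1, hca, hcb⟩ := lift hab
    obtain ⟨x', y', hxy', hx1, hy1, hcx, hcy⟩ := lift hxy
    have h2 : s(c a', c b') = s(c x', c y') := by rw [hca, hcb, hcx, hcy]; exact h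
    have h3 := hc.2 hab' hxy' h2
    have h4 : s((if a' = v then u else a'), (if b' = v then u else b')) =
        s((if x' = v then u else x'), (if y' = v then u else y')) := by
      have := congrArg (Sym2.map (fun t => if t = v then u else t)) h3
      simpa only [Sym2.map_pair_eq] using this
    rw [← ha1, ← hb1, ← hx1, ← hy1] at h4
    exact Sym2.map.injective Subtype.val_injective
      (by simpa only [Sym2.map_pair_eq] using h4)

lemma up {V : Type*} [Fintype V] [DecidableEq V] {G : SimpleGraph V} {u v : V}
    (hd : DistAtLeastThree G u v) :
    hchrom G ≤ hchrom (identify G u v) := by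
  obtain ⟨d, hd1, hd2⟩ := Nat.sInf_mem (hset_ne (identify G u v))
  apply Nat.sInf_le
  set g : V → {x : V // x ≠ v} := fun t => if h : t = v then ⟨u, hd.1⟩ else ⟨t, h⟩ with hg
  have gval : ∀ t, (g t).1 = if t = v then u else t := by
    intro t; by_cases h : t = v <;> simp [hg, h]
  have gadj : ∀ {a b : V}, G.Adj a b → (identify G u v).Adj (g a) (g b) := by
    intro a b hab
    by_cases ha : a = v
    · have hb : b ≠ v := fun hb => hab.ne (ha.trans hb.symm)
      refine ⟨?_, Or.inr (Or.inl ⟨?_, ?_⟩)⟩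
      · intro he
        have h2 : u = b := by
          have := congrArg Subtype.val he
          rwa [gval, gval, if_pos ha, if_neg hb] at this
        rw [ha] at hab
        rw [← h2] at hab
        exact hd.2.1 hab.symm
      · rw [gval, if_pos ha]
      · rw [gval, if_neg hb]; rw [ha] at hab; exact hab
    · by_cases hb : b = v
      · refine ⟨?_, Or.inr (Or.inr ⟨?_, ?_⟩)⟩
        · intro he
          have h2 : a = u := by
            have := congrArg Subtype.val he
            rwa [gval, gval, if_neg ha, if_pos hb] at this
          rw [hb] at hab
          rw [h2] at hab
          exact hd.2.1 hab
        · rw [gval, if_pos hb]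
        · rw [gval, if_neg ha]; rw [hb] at hab; exact hab
      · refine ⟨?_, Or.inl ?_⟩
        · intro he
          have h2 : a = b := by
            have := congrArg Subtype.val he
            rwa [gval, gval, if_neg ha, if_neg hb] at this
          exact hab.ne h2
        · rw [gval, gval, if_neg ha, if_neg hb]; exact hab
  refine ⟨fun t => d (g t), fun a b hab => hd1 (gadj hab), ?_⟩
  intro a b x y hab hxy h
  have h3 := hd2 (gadj hab) (gadj hxy) h
  have h4 := congrArg (Sym2.map (Subtype.val : {x : V // x ≠ v} → V)) h3
  simp only [Sym2.map_pair_eq] at h4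
  rw [gval, gval, gval, gval] at h4
  exact key hd hab hxy h4

/-- If `G` has diameter at least 3, some identification of vertices at distance
at least 3 preserves the harmonious chromatic number. -/
theorem stmt9 {V : Type*} [Fintype V] [DecidableEq V] (G : SimpleGraph V)
    (hdiam : ∃ u v : V, DistAtLeastThree G u v) :
    ∃ u v : V, DistAtLeastThree G u v ∧ hchrom (identify G u v) = hchrom G := by
  obtain ⟨c, hc⟩ := Nat.sInf_mem (hset_ne G)
  by_cases hinj : Function.Injective c
  · obtain ⟨u, v, hd⟩ := hdiam
    refine ⟨u, v, hd, le_antisymm ?_ (up hd)⟩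
    have hharm : IsHarmonious G (fun t => c (if t = v then u else t)) := by
      constructor
      · intro p q hpq hcc
        have h2 := hinj hcc
        by_cases hp : p = v
        · have hq : q ≠ v := fun hq => hpq.ne (hp.trans hq.symm)
          rw [if_pos hp, if_neg hq] at h2
          rw [hp] at hpq; rw [← h2] at hpq
          exact hd.2.1 hpq.symm
        · by_cases hq : q = v
          · rw [if_neg hp, if_pos hq] at h2
            rw [hq] at hpq; rw [h2] at hpq
            exact hd.2.1 hpq
          · rw [if_neg hp, if_neg hq] at h2
            exact hpq.ne h2
      · intro p q r t hpq hrt h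
        exact key hd hpq hrt
          (Sym2.map.injective hinj (by simpa only [Sym2.map_pair_eq] using h))
    have huv : (fun t => c (if t = v then u else t)) u = (fun t => c (if t = v then u else t)) v := by
      simp
    exact down hd hharm huv
  · rw [Function.not_injective_iff] at hinj
    obtain ⟨a, b, he, hne⟩ := hinj
    have hd := dist_of_eq hc hne he
    exact ⟨a, b, hd, le_antisymm (down hd hc he) (up hd)⟩
end

section
/- If h(G) = k, then there exists a sequence of vertex identifications applied to G, where at each step the identified vertices have distance at least 3 in the current graph, whose result is a graph H with k vertices and diameter at most 2. -/
/-- `SeqIdent3 G H`: `H` is obtained from `G` by a sequence of identifications,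
each applied to a pair of vertices at distance at least 3 in the current graph. -/
inductive SeqIdent3 : ∀ {n m : ℕ}, SimpleGraph (Fin n) → SimpleGraph (Fin m) → Prop
  | refl {n : ℕ} (G : SimpleGraph (Fin n)) : SeqIdent3 G G
  | step {n m : ℕ} {G : SimpleGraph (Fin (n + 1))} {G' : SimpleGraph (Fin n)}
      {H : SimpleGraph (Fin m)} (u v : Fin (n + 1))
      (hd : DistAtLeastThree G u v) (hiso : Nonempty (G' ≃g identify G u v)) :
      SeqIdent3 G' H → SeqIdent3 G H

section Aux

variable {V W α β : Type*}

lemma harm_of_inj (G : SimpleGraph V) {c : V → α}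
    (hinj : Function.Injective c) : IsHarmonious G c := by
  constructor
  · intro u v h he; exact h.ne (hinj he)
  · intro u v x y _ _ he
    rw [Sym2.eq_iff] at he ⊢
    rcases he with ⟨h1, h2⟩ | ⟨h1, h2⟩
    · exact Or.inl ⟨hinj h1, hinj h2⟩
    · exact Or.inr ⟨hinj h1, hinj h2⟩

lemma harm_iso {G : SimpleGraph V} {G' : SimpleGraph W}
    (φ : G ≃g G') {c : V → α} (hc : IsHarmonious G c) :
    IsHarmonious G' (fun w => c (φ.symm w)) := by
  constructor
  · intro a b h he
    exact hc.1 (φ.symm.map_adj_iff.mpr h) he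
  · intro a b x y ha hx he
    have h2 := hc.2 (φ.symm.map_adj_iff.mpr ha) (φ.symm.map_adj_iff.mpr hx) he
    rw [Sym2.eq_iff] at h2 ⊢
    rcases h2 with ⟨h1, h2⟩ | ⟨h1, h2⟩
    · exact Or.inl ⟨φ.symm.injective h1, φ.symm.injective h2⟩
    · exact Or.inr ⟨φ.symm.injective h1, φ.symm.injective h2⟩

lemma dist3 {G : SimpleGraph V} {c : V → α} (hc : IsHarmonious G c)
    {u v : V} (hne : u ≠ v) (hcc : c u = c v) : DistAtLeastThree G u v := by
  refine ⟨hne, fun h => hc.1 h hcc, fun w hw => ?_⟩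
  obtain ⟨h1, h2⟩ := hw
  have h3 : s(u, w) = s(v, w) := hc.2 h1 h2.symm (by rw [hcc])
  rw [Sym2.eq_iff] at h3
  rcases h3 with ⟨h, _⟩ | ⟨h, h'⟩
  · exact hne h
  · exact hne (h.trans h')

lemma r_eq [DecidableEq V] {u v : V} (huv : u ≠ v) {a x : V}
    (h : (if a = v then u else a) = (if x = v then u else x)) :
    a = x ∨ (a = v ∧ x = u) ∨ (x = v ∧ a = u) := by
  split_ifs at h with h1 h2 h2
  · exact Or.inl (h1.trans h2.symm)
  · exact Or.inr (Or.inl ⟨h1, h.symm⟩)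
  · exact Or.inr (Or.inr ⟨h2, h⟩)
  · exact Or.inl h

lemma r_cancel [DecidableEq V] {G : SimpleGraph V} {u v : V}
    (hd : DistAtLeastThree G u v) {a b x y : V} (hab : G.Adj a b) (hxy : G.Adj x y)
    (h1 : (if a = v then u else a) = (if x = v then u else x))
    (h2 : (if b = v then u else b) = (if y = v then u else y)) : a = x ∧ b = y := by
  obtain ⟨huv, hnadj, hcom⟩ := hd
  rcases r_eq huv h1 with g1 | ⟨g1, g1'⟩ | ⟨g1, g1'⟩ <;>
    rcases r_eq huv h2 with g2 | ⟨g2, g2'⟩ | ⟨g2, g2'⟩ <;> subst_vars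
  · exact ⟨rfl, rfl⟩
  · exact absurd ⟨hxy.symm, hab⟩ (hcom x)
  · exact absurd ⟨hab.symm, hxy⟩ (hcom x)
  · exact absurd ⟨hxy, hab.symm⟩ (hcom y)
  · exact absurd rfl hab.ne
  · exact absurd hab.symm hnadj
  · exact absurd ⟨hab, hxy.symm⟩ (hcom y)
  · exact absurd hab hnadj
  · exact absurd rfl hxy.ne

lemma descend {G : SimpleGraph V} {c : V → α} (hc : IsHarmonious G c)
    {u v : V} (hcc : c u = c v) :
    IsHarmonious (identify G u v) (fun a => c a.1) := by
  have key : ∀ {a b : {x : V // x ≠ v}}, (identify G u v).Adj a b →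
      ∃ p q, G.Adj p q ∧ c p = c a.1 ∧ c q = c b.1 ∧
        (p = a.1 ∨ (p = v ∧ a.1 = u)) ∧ (q = b.1 ∨ (q = v ∧ b.1 = u)) := by
    rintro a b ⟨hne, h | ⟨h1, h2⟩ | ⟨h1, h2⟩⟩
    · exact ⟨a.1, b.1, h, rfl, rfl, Or.inl rfl, Or.inl rfl⟩
    · exact ⟨v, b.1, h2, by rw [← hcc, h1], rfl, Or.inr ⟨rfl, h1⟩, Or.inl rfl⟩
    · exact ⟨a.1, v, h2, rfl, by rw [← hcc, h1], Or.inl rfl, Or.inr ⟨rfl, h1⟩⟩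
  have rec1 : ∀ {p : V} {a x : {y : V // y ≠ v}}, (p = a.1 ∨ (p = v ∧ a.1 = u)) →
      (p = x.1 ∨ (p = v ∧ x.1 = u)) → a = x := by
    rintro p a x (rfl | ⟨rfl, h2⟩) (h3 | ⟨h3, h4⟩)
    · exact Subtype.ext h3
    · exact absurd h3 a.2
    · exact absurd h3.symm x.2
    · exact Subtype.ext (h2.trans h4.symm)
  constructor
  · intro a b hab he
    obtain ⟨p, q, hpq, hp, hq, _, _⟩ := key hab
    exact hc.1 hpq (hp.trans (he.trans hq.symm))
  · intro a b x y hab hxy he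
    obtain ⟨p, q, hpq, hp, hq, hpa, hqb⟩ := key hab
    obtain ⟨p', q', hpq', hp', hq', hpx, hqy⟩ := key hxy
    have h3 : s(p, q) = s(p', q') :=
      hc.2 hpq hpq' (by rw [hp, hq, hp', hq']; exact he)
    rw [Sym2.eq_iff] at h3 ⊢
    rcases h3 with ⟨e1, e2⟩ | ⟨e1, e2⟩
    · exact Or.inl ⟨rec1 hpa (by rw [e1]; exact hpx), rec1 hqb (by rw [e2]; exact hqy)⟩
    · exact Or.inr ⟨rec1 hpa (by rw [e1]; exact hqy), rec1 hqb (by rw [e2]; exact hpx)⟩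

lemma harm_lift [DecidableEq V] {G : SimpleGraph V} {u v : V}
    (hd : DistAtLeastThree G u v) {d : {x : V // x ≠ v} → α}
    (hdh : IsHarmonious (identify G u v) d) :
    ∃ d' : V → α, IsHarmonious G d' := by
  obtain ⟨huv, hnadj, hcom⟩ := hd
  set rs : V → {x : V // x ≠ v} := fun x => if h : x = v then ⟨u, huv⟩ else ⟨x, h⟩ with hrs
  have rs_val : ∀ x, (rs x).1 = if x = v then u else x := by
    intro x; by_cases h : x = v <;> simp [hrs, h]
  have rs_adj : ∀ {a b : V}, G.Adj a b → (identify G u v).Adj (rs a) (rs b) := by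
    intro a b hab
    by_cases ha : a = v <;> by_cases hb : b = v
    · subst ha; subst hb; exact absurd rfl hab.ne
    · subst ha
      simp only [hrs, dif_pos rfl, dif_neg hb]
      refine ⟨?_, Or.inr (Or.inl ⟨rfl, hab⟩)⟩
      intro hh
      have : u = b := congrArg Subtype.val hh
      exact hnadj (this ▸ hab.symm)
    · subst hb
      simp only [hrs, dif_pos rfl, dif_neg ha]
      refine ⟨?_, Or.inr (Or.inr ⟨rfl, hab⟩)⟩
      intro hh
      have : a = u := congrArg Subtype.val hh
      exact hnadj (this ▸ hab)
    · simp only [hrs, dif_neg ha, dif_neg hb]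
      exact ⟨fun hh => hab.ne (congrArg Subtype.val hh), Or.inl hab⟩
  refine ⟨fun x => d (rs x), ?_, ?_⟩
  · intro a b hab he; exact hdh.1 (rs_adj hab) he
  · intro a b x y hab hxy he
    have h2 := hdh.2 (rs_adj hab) (rs_adj hxy) he
    have hc3 : DistAtLeastThree G u v := ⟨huv, hnadj, hcom⟩
    rw [Sym2.eq_iff] at h2 ⊢
    rcases h2 with ⟨e1, e2⟩ | ⟨e1, e2⟩
    · exact Or.inl (r_cancel hc3 hab hxy
        (by rw [← rs_val, ← rs_val]; exact congrArg Subtype.val e1)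
        (by rw [← rs_val, ← rs_val]; exact congrArg Subtype.val e2))
    · obtain ⟨g1, g2⟩ := r_cancel hc3 hab hxy.symm
        (by rw [← rs_val, ← rs_val]; exact congrArg Subtype.val e1)
        (by rw [← rs_val, ← rs_val]; exact congrArg Subtype.val e2)
      exact Or.inr ⟨g1, g2⟩

lemma final_case {m k : ℕ} (G : SimpleGraph (Fin m)) (c : Fin m → Fin k)
    (hc : IsHarmonious G c) (hinj : Function.Injective c)
    (hmin : ∀ (j : ℕ) (d : Fin m → Fin j), IsHarmonious G d → k ≤ j) :
    m = k ∧ ∀ u v : Fin m, u ≠ v → G.Adj u v ∨ ∃ w, G.Adj u w ∧ G.Adj w v := by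
  have hmk : m ≤ k := by simpa using Fintype.card_le_of_injective c hinj
  have hkm : k ≤ m := hmin m id (harm_of_inj G Function.injective_id)
  refine ⟨le_antisymm hmk hkm, ?_⟩
  intro u v huv
  by_contra hcon
  push_neg at hcon
  obtain ⟨hnadj, hcom⟩ := hcon
  have hd3 : DistAtLeastThree G u v := ⟨huv, hnadj, fun w hw => hcom w hw.1 hw.2⟩
  have hdharm : IsHarmonious G (fun x => c (if x = v then u else x)) := by
    constructor
    · intro a b hab he
      rcases r_eq huv (hinj he) with h | ⟨h, h'⟩ | ⟨h, h'⟩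
      · exact hab.ne h
      · subst h; subst h'; exact hnadj hab.symm
      · subst h; subst h'; exact hnadj hab
    · intro a b x y hab hxy he
      rw [Sym2.eq_iff] at he ⊢
      rcases he with ⟨e1, e2⟩ | ⟨e1, e2⟩
      · exact Or.inl (r_cancel hd3 hab hxy (hinj e1) (hinj e2))
      · obtain ⟨g1, g2⟩ := r_cancel hd3 hab hxy.symm (hinj e1) (hinj e2)
        exact Or.inr ⟨g1, g2⟩
  have hrange : ∀ x : Fin m, c (if x = v then u else x) ≠ c v := by
    intro x he
    have h := hinj he
    split_ifs at h with hxv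
    · exact huv h
    · exact hxv h
  have hm1 : 0 < m := u.pos
  have hcard : Fintype.card {y : Fin k // y ≠ c v} = k - 1 := by
    simp [Fintype.card_subtype_compl]
  let e := Fintype.equivFinOfCardEq hcard
  have hd2 : IsHarmonious G (fun x => e ⟨c (if x = v then u else x), hrange x⟩) := by
    constructor
    · intro a b hab he
      exact hdharm.1 hab (congrArg Subtype.val (e.injective he))
    · intro a b x y hab hxy he
      apply hdharm.2 hab hxy
      rw [Sym2.eq_iff] at he ⊢
      rcases he with ⟨e1, e2⟩ | ⟨e1, e2⟩
      · exact Or.inl ⟨congrArg Subtype.val (e.injective e1),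
          congrArg Subtype.val (e.injective e2)⟩
      · exact Or.inr ⟨congrArg Subtype.val (e.injective e1),
          congrArg Subtype.val (e.injective e2)⟩
  have := hmin (k - 1) _ hd2
  have hk1 : 0 < k := hmk.trans_lt' hm1 |>.trans_le le_rfl
  omega

lemma aux (k : ℕ) : ∀ (n : ℕ) (G : SimpleGraph (Fin n)) (c : Fin n → Fin k),
    IsHarmonious G c → (∀ (j : ℕ) (d : Fin n → Fin j), IsHarmonious G d → k ≤ j) →
    ∃ H : SimpleGraph (Fin k), SeqIdent3 G H ∧
      ∀ u v : Fin k, u ≠ v → H.Adj u v ∨ ∃ w : Fin k, H.Adj u w ∧ H.Adj w v := by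
  intro n
  induction n with
  | zero =>
    intro G c hc hmin
    obtain ⟨hm, hdiam⟩ := final_case G c hc (fun a => a.elim0) hmin
    subst hm
    exact ⟨G, SeqIdent3.refl G, hdiam⟩
  | succ n ih =>
    intro G c hc hmin
    by_cases hinj : Function.Injective c
    · obtain ⟨hm, hdiam⟩ := final_case G c hc hinj hmin
      subst hm
      exact ⟨G, SeqIdent3.refl G, hdiam⟩
    · rw [Function.not_injective_iff] at hinj
      obtain ⟨u, v, hcc, hne⟩ := hinj
      have hd3 := dist3 hc hne hcc
      have hcard : Fintype.card {x : Fin (n + 1) // x ≠ v} = n := by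
        simp [Fintype.card_subtype_compl]
      let e : Fin n ≃ {x : Fin (n + 1) // x ≠ v} := (Fintype.equivFinOfCardEq hcard).symm
      let G' : SimpleGraph (Fin n) := (identify G u v).comap e
      have φ : G' ≃g identify G u v := ⟨e, Iff.rfl⟩
      have hdesc := descend hc hcc
      have hmin' : ∀ (j : ℕ) (d : Fin n → Fin j), IsHarmonious G' d → k ≤ j := by
        intro j d hd
        obtain ⟨d', hd'⟩ := harm_lift hd3 (harm_iso φ hd)
        exact hmin j d' hd'
      obtain ⟨H, hseq, hdiam⟩ := ih G' _ (harm_iso φ.symm hdesc) hmin'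
      exact ⟨H, SeqIdent3.step u v hd3 ⟨φ⟩ hseq, hdiam⟩

end Aux

/-- If `h(G) = k`, some sequence of identifications of vertices at distance at
least 3 turns `G` into a graph with `k` vertices and diameter at most 2. -/
theorem stmt12 {n k : ℕ} (G : SimpleGraph (Fin n)) (h : hchrom G = k) :
    ∃ H : SimpleGraph (Fin k), SeqIdent3 G H ∧
      ∀ u v : Fin k, u ≠ v → H.Adj u v ∨ ∃ w : Fin k, H.Adj u w ∧ H.Adj w v := by
  subst h
  have hmem : hchrom G ∈ {k | ∃ c : Fin n → Fin k, IsHarmonious G c} :=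
    Nat.sInf_mem ⟨n, ⟨id, harm_of_inj G Function.injective_id⟩⟩
  obtain ⟨c, hc⟩ := hmem
  exact aux (hchrom G) n G c hc (fun j d hd => Nat.sInf_le ⟨d, hd⟩)
end
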